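/- (Continuity of f ↦ v(τ_f).) Assume the conditional absolute continuity assumption with moduli (ρ_t)_{t∈𝒯}, set ρ(ι) = Σ_{t∈𝒯} ρ_t(ι), assume Φ = Σ_{t∈𝒯}|Y_t| is square-integrable, set C = 2‖Φ‖_{L²(Q)}, and assume tightness: for every δ > 0 there is a compact K ⊆ E with Q(Ξ(X_t) ∈ K for all t ∈ 𝒯) ≥ 1 − δ. Then for every δ > 0 there exists a compact set K ⊆ E such that for every ι > 0 and all stopping boundaries f, f' satisfying f(t,ξ) ≤ f'(t,ξ) + ι and f'(t,ξ) ≤ f(t,ξ) + ι for all (t,ξ) ∈ 𝒯 × K (inequalities in [0,∞]), one has |v(τ_f) − v(τ_{f'})| ≤ C · (ρ(ι) + δ)^{1/2}. -/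

import Mathlib

open MeasureTheory
open scoped ENNReal NNReal Classical

/-- First hitting time of the family of sets `S` along the path `x`, valued in `T ∪ {∞}`:
the least `t ∈ T` with `x t ∈ S t`, and `⊤` (= ∞) if there is no such `t`. -/
noncomputable def firstHit {T X : Type*} [Fintype T] [LinearOrder T]
    (S : T → Set X) (x : T → X) : WithTop T :=
  (Finset.univ.filter fun t => x t ∈ S t).min

/-- Reward collected at a (possibly infinite) stopping date: `Y t ω` if `τ = t ∈ T`, and `0`
if `τ = ∞` (that is, `Y_τ 1_{τ ≠ ∞}`). -/
noncomputable def hitReward {T Ω : Type*} (Y : T → Ω → ℝ) (τ : WithTop T) (ω : Ω) : ℝ :=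
  WithTop.recTopCoe 0 (fun t => Y t ω) τ

lemma firstHit_eq_coe_iff {T X : Type*} [Fintype T] [LinearOrder T]
    (S : T → Set X) (x : T → X) (t : T) :
    firstHit S x = (t : WithTop T) ↔ x t ∈ S t ∧ ∀ s, x s ∈ S s → t ≤ s := by
  unfold firstHit
  constructor
  · intro h
    have ht := Finset.mem_of_min h
    simp only [Finset.mem_filter] at ht
    refine ⟨ht.2, fun s hs => ?_⟩
    have hmem : s ∈ Finset.univ.filter fun u => x u ∈ S u := by simp [hs]
    have := Finset.min_le hmem
    rw [h] at this
    exact_mod_cast this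
  · rintro ⟨h1, h2⟩
    apply le_antisymm
    · exact Finset.min_le (by simp [h1])
    · apply Finset.le_min
      intro b hb
      simp only [Finset.mem_filter] at hb
      exact_mod_cast WithTop.coe_le_coe.2 (h2 b hb.2)

lemma firstHit_congr {T X : Type*} [Fintype T] [LinearOrder T]
    {S S' : T → Set X} {x : T → X} (h : ∀ t, x t ∈ S t ↔ x t ∈ S' t) :
    firstHit S x = firstHit S' x := by
  unfold firstHit
  congr 1
  exact Finset.filter_congr fun t _ => by simp [h t]

lemma hitReward_eq_sum {T Ω : Type*} [Fintype T] (Y : T → Ω → ℝ) (τ : WithTop T) (ω : Ω) :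
    hitReward Y τ ω = ∑ t : T, if τ = (↑t : WithTop T) then Y t ω else 0 := by
  induction τ using WithTop.recTopCoe with
  | top => simp [hitReward]
  | coe t0 =>
    have : ∀ t : T, ((t0 : WithTop T) = (t : WithTop T)) = (t0 = t) := by
      intro t; simp
    simp only [hitReward, WithTop.recTopCoe, this]
    simp [Finset.sum_ite_eq]

lemma abs_hitReward_le {T Ω : Type*} [Fintype T] (Y : T → Ω → ℝ) (τ : WithTop T) (ω : Ω) :
    |hitReward Y τ ω| ≤ ∑ t, |Y t ω| := by
  induction τ using WithTop.recTopCoe with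
  | top =>
    simp only [hitReward, WithTop.recTopCoe, abs_zero]
    exact Finset.sum_nonneg fun t _ => abs_nonneg _
  | coe t0 =>
    simpa [hitReward] using Finset.single_le_sum (f := fun t => |Y t ω|)
      (fun t _ => abs_nonneg _) (Finset.mem_univ t0)

lemma measurableSet_firstHit_eq {T Ω X : Type*} [Fintype T] [LinearOrder T]
    [MeasurableSpace Ω] [MeasurableSpace X]
    {S : T → Set X} (hS : ∀ t, MeasurableSet (S t))
    {Xp : T → Ω → X} (hX : ∀ t, Measurable (Xp t)) (t : T) :
    MeasurableSet {ω | firstHit S (fun s => Xp s ω) = (t : WithTop T)} := by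
  have heq : {ω | firstHit S (fun s => Xp s ω) = (t : WithTop T)} =
      {ω | Xp t ω ∈ S t} ∩ ⋂ s, {ω | Xp s ω ∈ S s → t ≤ s} := by
    ext ω
    simp only [Set.mem_setOf_eq, Set.mem_inter_iff, Set.mem_iInter,
      firstHit_eq_coe_iff]
  rw [heq]
  refine ((hX t) (hS t)).inter (MeasurableSet.iInter fun s => ?_)
  by_cases h : t ≤ s
  · have : {ω | Xp s ω ∈ S s → t ≤ s} = Set.univ := by ext ω; simp [h]
    rw [this]; exact MeasurableSet.univ
  · have : {ω | Xp s ω ∈ S s → t ≤ s} = {ω | Xp s ω ∈ S s}ᶜ := by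
      ext ω; simp [h]
    rw [this]; exact ((hX s) (hS s)).compl

lemma measurable_hitReward {T Ω X : Type*} [Fintype T] [LinearOrder T]
    [MeasurableSpace Ω] [MeasurableSpace X]
    {S : T → Set X} (hS : ∀ t, MeasurableSet (S t))
    {Xp : T → Ω → X} (hX : ∀ t, Measurable (Xp t))
    {Y : T → Ω → ℝ} (hY : ∀ t, Measurable (Y t)) :
    Measurable fun ω => hitReward Y (firstHit S (fun s => Xp s ω)) ω := by
  have heq : (fun ω => hitReward Y (firstHit S (fun s => Xp s ω)) ω) =
      fun ω => ∑ t : T, Set.indicator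
        {ω | firstHit S (fun s => Xp s ω) = (t : WithTop T)} (Y t) ω := by
    funext ω
    rw [hitReward_eq_sum]
    refine Finset.sum_congr rfl fun t _ => ?_
    rw [Set.indicator_apply]
    simp only [Set.mem_setOf_eq]
    split_ifs <;> rfl
  rw [heq]
  exact Finset.measurable_sum _ fun t _ =>
    (hY t).indicator (measurableSet_firstHit_eq hS hX t)

/-- **Continuity of `f ↦ v(τ_f)`** (Theorem 4.2).

Under the conditional absolute continuity assumption with moduli `(ρ_t)`, square
integrability of `Φ = Σ_t |Y_t|` (with `C = 2‖Φ‖_{L²(Q)}`), and tightness of the laws of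
`(Ξ(X_t))`: for every `δ > 0` there is a compact `K ⊆ E` such that whenever two stopping
boundaries `f, f'` (lower semicontinuous in space, `[0,∞]`-valued) are uniformly `ι`-close on
`T × K`, the values `v(τ_f) = E[Y_{τ_f} 1_{τ_f ≠ ∞}]` of their hitting times satisfy
`|v(τ_f) − v(τ_{f'})| ≤ C (ρ(ι) + δ)^{1/2}` where `ρ(ι) = Σ_t ρ_t(ι)`. -/
theorem value_functional_continuity
    {T Ω X E : Type*} [Fintype T] [Nonempty T] [LinearOrder T]
    [MeasurableSpace Ω]
    [TopologicalSpace X] [MeasurableSpace X] [BorelSpace X]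
    [TopologicalSpace E] [T2Space E] [MeasurableSpace E] [BorelSpace E]
    (Q : Measure Ω) [IsProbabilityMeasure Q]
    (α : X → ℝ≥0) (hα : Measurable α) (Ξ : X → E) (hΞ : Measurable Ξ)
    (Xp : T → Ω → X) (hX : ∀ t, Measurable (Xp t))
    (Y : T → Ω → ℝ) (hY : ∀ t, Measurable (Y t))
    (hΦ : Integrable (fun ω => (∑ t, |Y t ω|) ^ 2) Q)
    (ρ : T → ℝ≥0∞ → ℝ) (hρ : ∀ t ι, ρ t ι ∈ Set.Icc (0 : ℝ) 1)
    -- conditional absolute continuity assumption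
    (hAC : ∀ t (g : E → ℝ≥0∞), Measurable g → ∀ ι : ℝ≥0∞, 0 < ι →
      (Q {ω | g (Ξ (Xp t ω)) ≤ (α (Xp t ω) : ℝ≥0∞) ∧
              (α (Xp t ω) : ℝ≥0∞) < g (Ξ (Xp t ω)) + ι}).toReal ≤ ρ t ι)
    -- tightness of the laws of (Ξ(X_t))
    (htight : ∀ δ : ℝ, 0 < δ → ∃ K : Set E, IsCompact K ∧
      1 - δ ≤ (Q {ω | ∀ t, Ξ (Xp t ω) ∈ K}).toReal) :
    ∀ δ : ℝ, 0 < δ → ∃ K : Set E, IsCompact K ∧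
      ∀ ι : ℝ≥0∞, 0 < ι →
      ∀ f f' : T → E → ℝ≥0∞,
        (∀ t, LowerSemicontinuous (f t)) → (∀ t, LowerSemicontinuous (f' t)) →
        (∀ t, ∀ ξ ∈ K, f t ξ ≤ f' t ξ + ι ∧ f' t ξ ≤ f t ξ + ι) →
        |(∫ ω, hitReward Y
              (firstHit (fun t => {x | f t (Ξ x) ≤ (α x : ℝ≥0∞)}) (fun t => Xp t ω)) ω ∂Q) -
          ∫ ω, hitReward Y
              (firstHit (fun t => {x | f' t (Ξ x) ≤ (α x : ℝ≥0∞)}) (fun t => Xp t ω)) ω ∂Q| ≤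
        (2 * Real.sqrt (∫ ω, (∑ t, |Y t ω|) ^ 2 ∂Q)) *
          Real.sqrt ((∑ t, ρ t ι) + δ) := by
  intro δ hδ
  obtain ⟨K, hKcomp, hKQ⟩ := htight δ hδ
  refine ⟨K, hKcomp, ?_⟩
  intro ι hι f f' hlsc hlsc' hclose
  set Φ : Ω → ℝ := fun ω => ∑ t, |Y t ω| with hΦdef
  set S : T → Set X := fun t => {x | f t (Ξ x) ≤ (α x : ℝ≥0∞)} with hSdef
  set S' : T → Set X := fun t => {x | f' t (Ξ x) ≤ (α x : ℝ≥0∞)} with hS'def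
  have hfm : ∀ t, Measurable (f t) := fun t => (hlsc t).measurable
  have hf'm : ∀ t, Measurable (f' t) := fun t => (hlsc' t).measurable
  have hαm : Measurable fun x => (α x : ℝ≥0∞) := hα.coe_nnreal_ennreal
  have hSmeas : ∀ t, MeasurableSet (S t) := fun t =>
    measurableSet_le ((hfm t).comp hΞ) hαm
  have hS2meas : ∀ t, MeasurableSet (S' t) := fun t =>
    measurableSet_le ((hf'm t).comp hΞ) hαm
  set h1 : Ω → ℝ := fun ω => hitReward Y (firstHit S fun t => Xp t ω) ω with hh1
  set h2 : Ω → ℝ := fun ω => hitReward Y (firstHit S' fun t => Xp t ω) ω with hh2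
  have hm1 : Measurable h1 := measurable_hitReward hSmeas hX hY
  have hm2 : Measurable h2 := measurable_hitReward hS2meas hX hY
  have hΦm : Measurable Φ := Finset.measurable_sum _ fun t _ => (hY t).abs
  have hΦnn : ∀ ω, 0 ≤ Φ ω := fun ω => Finset.sum_nonneg fun t _ => abs_nonneg _
  have hΦ2 : MemLp Φ 2 Q :=
    (memLp_two_iff_integrable_sq hΦm.aestronglyMeasurable).2 hΦ
  have hΦint : Integrable Φ Q := hΦ2.integrable one_le_two
  have habs1 : ∀ ω, |h1 ω| ≤ Φ ω := fun ω => abs_hitReward_le Y _ ω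
  have habs2 : ∀ ω, |h2 ω| ≤ Φ ω := fun ω => abs_hitReward_le Y _ ω
  have hint1 : Integrable h1 Q := hΦint.mono' hm1.aestronglyMeasurable
    (ae_of_all _ fun ω => by simpa using habs1 ω)
  have hint2 : Integrable h2 Q := hΦint.mono' hm2.aestronglyMeasurable
    (ae_of_all _ fun ω => by simpa using habs2 ω)
  -- the exceptional set
  set g : T → E → ℝ≥0∞ := fun t ξ => min (f t ξ) (f' t ξ) with hgdef
  have hgm : ∀ t, Measurable (g t) := fun t => (hfm t).min (hf'm t)
  set C : T → Set Ω := fun t => {ω | g t (Ξ (Xp t ω)) ≤ (α (Xp t ω) : ℝ≥0∞) ∧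
      (α (Xp t ω) : ℝ≥0∞) < g t (Ξ (Xp t ω)) + ι} with hCdef
  have hCm : ∀ t, MeasurableSet (C t) := by
    intro t
    have hg' : Measurable fun ω => g t (Ξ (Xp t ω)) := (hgm t).comp (hΞ.comp (hX t))
    have hα' : Measurable fun ω => (α (Xp t ω) : ℝ≥0∞) := hαm.comp (hX t)
    have hg'' : Measurable fun ω => g t (Ξ (Xp t ω)) + ι := hg'.add_const ι
    have hA : MeasurableSet {ω | g t (Ξ (Xp t ω)) ≤ (α (Xp t ω) : ℝ≥0∞)} :=
      measurableSet_le hg' hα'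
    have hB : MeasurableSet {ω | (α (Xp t ω) : ℝ≥0∞) < g t (Ξ (Xp t ω)) + ι} :=
      measurableSet_lt hα' hg''
    exact hA.inter hB
  set G : Set Ω := {ω | ∀ t, Ξ (Xp t ω) ∈ K} with hGdef
  have hGm : MeasurableSet G := by
    have : G = ⋂ t, (fun ω => Ξ (Xp t ω)) ⁻¹' K := by
      ext ω; simp [hGdef, Set.mem_iInter]
    rw [this]
    exact MeasurableSet.iInter fun t => (hΞ.comp (hX t)) hKcomp.isClosed.measurableSet
  set D : Set Ω := Gᶜ ∪ ⋃ t, C t with hDdef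
  have hDm : MeasurableSet D := hGm.compl.union (MeasurableSet.iUnion fun t => hCm t)
  -- pointwise bound
  have hpt : ∀ ω, |h1 ω - h2 ω| ≤ D.indicator (fun ω => 2 * Φ ω) ω := by
    intro ω
    by_cases hωD : ω ∈ D
    · rw [Set.indicator_of_mem hωD]
      calc |h1 ω - h2 ω| ≤ |h1 ω| + |h2 ω| := abs_sub _ _
        _ ≤ Φ ω + Φ ω := add_le_add (habs1 ω) (habs2 ω)
        _ = 2 * Φ ω := by ring
    · rw [Set.indicator_of_notMem hωD]
      simp only [hDdef, Set.mem_union, Set.mem_compl_iff, Set.mem_iUnion, not_or, not_not,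
        not_exists] at hωD
      obtain ⟨hωG, hωC⟩ := hωD
      have hωG' : ∀ t, Ξ (Xp t ω) ∈ K := hωG
      have hττ : firstHit S (fun t => Xp t ω) = firstHit S' (fun t => Xp t ω) := by
        apply firstHit_congr
        intro t
        have hξK : Ξ (Xp t ω) ∈ K := hωG' t
        have hnC := hωC t
        simp only [hCdef, Set.mem_setOf_eq, hgdef] at hnC
        simp only [hSdef, hS'def, Set.mem_setOf_eq]
        constructor
        · intro hmem
          by_contra hnot
          have hlt : (α (Xp t ω) : ℝ≥0∞) < f' t (Ξ (Xp t ω)) := not_le.1 hnot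
          apply hnC
          refine ⟨le_trans (min_le_left _ _) hmem, ?_⟩
          have hmin : min (f t (Ξ (Xp t ω))) (f' t (Ξ (Xp t ω))) = f t (Ξ (Xp t ω)) :=
            min_eq_left (le_of_lt (lt_of_le_of_lt hmem hlt))
          rw [hmin]
          exact lt_of_lt_of_le hlt (hclose t _ hξK).2
        · intro hmem
          by_contra hnot
          have hlt : (α (Xp t ω) : ℝ≥0∞) < f t (Ξ (Xp t ω)) := not_le.1 hnot
          apply hnC
          refine ⟨le_trans (min_le_right _ _) hmem, ?_⟩
          have hmin : min (f t (Ξ (Xp t ω))) (f' t (Ξ (Xp t ω))) = f' t (Ξ (Xp t ω)) :=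
            min_eq_right (le_of_lt (lt_of_le_of_lt hmem hlt))
          rw [hmin]
          exact lt_of_lt_of_le hlt (hclose t _ hξK).1
      have : h1 ω = h2 ω := by simp only [hh1, hh2, hττ]
      simp [this]
  -- integral bound via the indicator
  have hintD : Integrable (D.indicator fun ω => 2 * Φ ω) Q :=
    (hΦint.const_mul 2).indicator hDm
  have step1 : |(∫ ω, h1 ω ∂Q) - ∫ ω, h2 ω ∂Q| ≤
      ∫ ω, D.indicator (fun ω => 2 * Φ ω) ω ∂Q := by
    rw [← integral_sub hint1 hint2]
    calc |∫ ω, (h1 ω - h2 ω) ∂Q| ≤ ∫ ω, |h1 ω - h2 ω| ∂Q := by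
          simpa [Real.norm_eq_abs] using
            norm_integral_le_integral_norm (fun ω => h1 ω - h2 ω) (μ := Q)
      _ ≤ ∫ ω, D.indicator (fun ω => 2 * Φ ω) ω ∂Q :=
          integral_mono (hint1.sub hint2).abs hintD hpt
  -- Cauchy-Schwarz
  set u : Ω → ℝ := D.indicator fun _ => (1 : ℝ) with hudef
  have hu2 : MemLp u 2 Q := (memLp_const (1 : ℝ)).indicator hDm
  have hprod : ∀ ω, D.indicator (fun ω => 2 * Φ ω) ω = 2 * (u ω * Φ ω) := by
    intro ω
    by_cases hω : ω ∈ D <;>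
      simp [hudef, Set.indicator_of_mem, Set.indicator_of_notMem, hω]
  have hrpow2 : ∀ x : ℝ, x ^ (2 : ℝ) = x ^ 2 := by
    intro x
    rw [show (2 : ℝ) = ((2 : ℕ) : ℝ) by norm_num, Real.rpow_natCast]
  have hofReal2 : ENNReal.ofReal (2 : ℝ) = 2 := by norm_num
  have hCS : ∫ ω, u ω * Φ ω ∂Q ≤
      Real.sqrt ((Q D).toReal) * Real.sqrt (∫ ω, Φ ω ^ 2 ∂Q) := by
    have hpq : (2 : ℝ).HolderConjugate 2 := Real.holderConjugate_iff.mpr ⟨one_lt_two, by norm_num⟩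
    have hunn : 0 ≤ᵐ[Q] u := ae_of_all _ fun ω =>
      Set.indicator_nonneg (fun _ _ => zero_le_one) ω
    have hΦnn' : 0 ≤ᵐ[Q] Φ := ae_of_all _ hΦnn
    have H := integral_mul_le_Lp_mul_Lq_of_nonneg hpq hunn hΦnn'
      (by rw [hofReal2]; exact hu2) (by rw [hofReal2]; exact hΦ2)
    have hu_sq : ∀ ω, u ω ^ (2 : ℝ) = u ω := by
      intro ω
      by_cases hω : ω ∈ D <;>
        simp [hudef, Set.indicator_of_mem, Set.indicator_of_notMem, hω,
          Real.zero_rpow (by norm_num : (2:ℝ) ≠ 0)]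
    have hIu : ∫ ω, u ω ^ (2 : ℝ) ∂Q = (Q D).toReal := by
      simp only [hu_sq]
      rw [hudef, integral_indicator_const (1 : ℝ) hDm]
      simp
      rfl
    have hIΦ : ∫ ω, Φ ω ^ (2 : ℝ) ∂Q = ∫ ω, Φ ω ^ 2 ∂Q := by
      simp only [hrpow2]
    rw [hIu, hIΦ] at H
    calc ∫ ω, u ω * Φ ω ∂Q
        ≤ (Q D).toReal ^ ((1:ℝ)/2) * (∫ ω, Φ ω ^ 2 ∂Q) ^ ((1:ℝ)/2) := H
      _ = Real.sqrt ((Q D).toReal) * Real.sqrt (∫ ω, Φ ω ^ 2 ∂Q) := by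
          rw [Real.sqrt_eq_rpow, Real.sqrt_eq_rpow]
  -- bound on the measure of D
  have hQC : ∀ t, (Q (C t)).toReal ≤ ρ t ι := by
    intro t
    have := hAC t (g t) (hgm t) ι hι
    simpa [hCdef] using this
  have hQG : (Q Gᶜ).toReal ≤ δ := by
    rw [prob_compl_eq_one_sub hGm,
      ENNReal.toReal_sub_of_le prob_le_one ENNReal.one_ne_top]
    simp only [ENNReal.toReal_one]
    have : 1 - δ ≤ (Q G).toReal := hKQ
    linarith
  have hQD : (Q D).toReal ≤ (∑ t, ρ t ι) + δ := by
    have hsum : Q D ≤ Q Gᶜ + ∑ t, Q (C t) :=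
      le_trans (measure_union_le _ _)
        (add_le_add_right (measure_iUnion_fintype_le Q C) _)
    have hne : (Q Gᶜ + ∑ t, Q (C t)) ≠ ⊤ := by
      refine ENNReal.add_ne_top.2 ⟨measure_ne_top _ _, ?_⟩
      exact (ENNReal.sum_lt_top.2 fun t _ => measure_lt_top _ _).ne
    have h' := ENNReal.toReal_mono hne hsum
    rw [ENNReal.toReal_add (measure_ne_top _ _)
      (ENNReal.sum_lt_top.2 fun t _ => measure_lt_top _ _).ne,
      ENNReal.toReal_sum fun t _ => measure_ne_top _ _] at h'
    have h'' : ∑ t, (Q (C t)).toReal ≤ ∑ t, ρ t ι :=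
      Finset.sum_le_sum fun t _ => hQC t
    linarith
  -- conclusion
  have hIΦnn : 0 ≤ ∫ ω, Φ ω ^ 2 ∂Q := integral_nonneg fun ω => sq_nonneg _
  calc |(∫ ω, h1 ω ∂Q) - ∫ ω, h2 ω ∂Q|
      ≤ ∫ ω, D.indicator (fun ω => 2 * Φ ω) ω ∂Q := step1
    _ = 2 * ∫ ω, u ω * Φ ω ∂Q := by
        rw [← integral_const_mul]
        exact integral_congr_ae (ae_of_all _ hprod)
    _ ≤ 2 * (Real.sqrt ((Q D).toReal) * Real.sqrt (∫ ω, Φ ω ^ 2 ∂Q)) := by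
        have := hCS
        nlinarith [Real.sqrt_nonneg ((Q D).toReal), Real.sqrt_nonneg (∫ ω, Φ ω ^ 2 ∂Q)]
    _ ≤ 2 * (Real.sqrt ((∑ t, ρ t ι) + δ) * Real.sqrt (∫ ω, Φ ω ^ 2 ∂Q)) := by
        have hmono : Real.sqrt ((Q D).toReal) ≤ Real.sqrt ((∑ t, ρ t ι) + δ) :=
          Real.sqrt_le_sqrt hQD
        nlinarith [Real.sqrt_nonneg (∫ ω, Φ ω ^ 2 ∂Q), Real.sqrt_nonneg ((Q D).toReal)]
    _ = (2 * Real.sqrt (∫ ω, (∑ t, |Y t ω|) ^ 2 ∂Q)) * Real.sqrt ((∑ t, ρ t ι) + δ) := by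
        ring
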